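/- (Bouchemakh–Engel) Every finite product of finite chains has the strong interval covering property: let ι be a finite index set, let c : ι → ℕ, and let P = Π_{i ∈ ι} {0, 1, …, c(i)} with the componentwise order, so that the rank of x ∈ P is r(x) = Σ_i x(i) and the j-th level is L_j = {x : r(x) = j}. Then for all 0 ≤ j ≤ k ≤ Σ_i c(i), the set {x ∈ P : j ≤ r(x) ≤ k} is the union of max(|L_j|, |L_k|) closed intervals [a, b] with a ∈ L_j and b ∈ L_k. -/

import Mathlib

namespace Stmt14Aux

variable {ι : Type*} [Fintype ι]

abbrev V (c : ι → ℕ) := ∀ i, Fin (c i + 1)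

def r (c : ι → ℕ) (x : V c) : ℕ := ∑ i, (x i : ℕ)

def N (c : ι → ℕ) : ℕ := ∑ i, c i

lemma r_le_N (c : ι → ℕ) (x : V c) : r c x ≤ N c :=
  Finset.sum_le_sum (fun i _ => Nat.lt_succ_iff.mp (x i).isLt)

lemma r_mono (c : ι → ℕ) {x y : V c} (h : x ≤ y) : r c x ≤ r c y :=
  Finset.sum_le_sum (fun i _ => h i)

/-- A nested symmetric chain decomposition. A chain is a pair `(lo, g)` where
`g m` is the chain's element of rank `m`, valid for `lo ≤ m ≤ N - lo`. -/
structure SCD (c : ι → ℕ) where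
  chains : Finset (ℕ × (ℕ → V c))
  lo_le : ∀ p ∈ chains, p.1 + p.1 ≤ N c
  rank_elt : ∀ p ∈ chains, ∀ m, p.1 ≤ m → m + p.1 ≤ N c → r c (p.2 m) = m
  mono : ∀ p ∈ chains, ∀ m, p.1 ≤ m → (m+1) + p.1 ≤ N c → p.2 m ≤ p.2 (m+1)
  mem_chain : ∀ x : V c, ∃ p ∈ chains, p.1 ≤ r c x ∧ r c x + p.1 ≤ N c ∧ p.2 (r c x) = x
  uniq : ∀ p ∈ chains, ∀ q ∈ chains, ∀ m, p.1 ≤ m → m + p.1 ≤ N c →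
      q.1 ≤ m → m + q.1 ≤ N c → p.2 m = q.2 m → p = q
  parent : ∀ p ∈ chains, 0 < p.1 → ∃ q ∈ chains, q.1 + 1 = p.1 ∧
      q.2 q.1 ≤ p.2 p.1 ∧ p.2 (N c - p.1) ≤ q.2 (N c - q.1)

variable {c : ι → ℕ}

lemma SCD.chain_le (S : SCD c) {p : ℕ × (ℕ → V c)} (hp : p ∈ S.chains)
    {m m' : ℕ} (h1 : p.1 ≤ m) (h2 : m ≤ m') (h3 : m' + p.1 ≤ N c) : p.2 m ≤ p.2 m' := by
  induction m' with
  | zero =>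
    have : m = 0 := by omega
    subst this; exact le_refl _
  | succ n ih =>
    rcases Nat.lt_or_ge m (n+1) with h | h
    · exact le_trans (ih (by omega) (by omega)) (S.mono p hp n (by omega) (by omega))
    · have : m = n + 1 := by omega
      subst this; exact le_refl _

lemma SCD.ancestor (S : SCD c) : ∀ n, ∀ p ∈ S.chains, p.1 = n → ∀ t, t ≤ n →
    ∃ q ∈ S.chains, q.1 = t ∧ q.2 t ≤ p.2 p.1 ∧ p.2 (N c - p.1) ≤ q.2 (N c - t) := by
  intro n
  induction n with
  | zero =>
    intro p hp hpn t ht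
    exact ⟨p, hp, by omega, by rw [show t = p.1 by omega], by rw [show t = p.1 by omega]⟩
  | succ n ih =>
    intro p hp hpn t ht
    rcases Nat.lt_or_ge t (n+1) with h | h
    · obtain ⟨q', hq', hq1, hbot, htop⟩ := S.parent p hp (by omega)
      obtain ⟨q, hq, hqt, hb2, ht2⟩ := ih q' hq' (by omega) t (by omega)
      exact ⟨q, hq, hqt, le_trans hb2 hbot, le_trans htop ht2⟩
    · exact ⟨p, hp, by omega, by rw [show t = p.1 by omega], by rw [show t = p.1 by omega]⟩

lemma exists_lower (c : ι → ℕ) (j : ℕ) :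
    ∀ n (x : V c), j + n = r c x → ∃ a, a ≤ x ∧ r c a = j := by
  intro n
  induction n with
  | zero => intro x hx; exact ⟨x, le_refl _, by omega⟩
  | succ n ih =>
    intro x hx
    classical
    have hpos : 0 < r c x := by omega
    have hex : ∃ i, (x i : ℕ) ≠ 0 := by
      by_contra hcon
      push_neg at hcon
      have : r c x = 0 := Finset.sum_eq_zero (fun i _ => hcon i)
      omega
    obtain ⟨i, hi⟩ := hex
    set x' : V c := Function.update x i ⟨(x i : ℕ) - 1, by omega⟩ with hx'
    have hle : x' ≤ x := by
      intro i'
      by_cases h : i' = i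
      · subst h; rw [hx', Function.update_self]; exact Nat.sub_le _ _
      · rw [hx', Function.update_of_ne h]
    have hr : r c x' = r c x - 1 := by
      have h1 : (x i : ℕ) + ∑ i' ∈ Finset.univ.erase i, (x i' : ℕ) = r c x := by
        simp only [r]; exact Finset.add_sum_erase _ (fun i' => ((x i' : ℕ))) (Finset.mem_univ i)
      have h2 : ((x i : ℕ) - 1) + ∑ i' ∈ Finset.univ.erase i, (x' i' : ℕ) = r c x' := by
        have h0 : (x' i : ℕ) + ∑ i' ∈ Finset.univ.erase i, (x' i' : ℕ) = r c x' := by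
          simp only [r]; exact Finset.add_sum_erase _ (fun i' => ((x' i' : ℕ))) (Finset.mem_univ i)
        have h5 : (x' i : ℕ) = (x i : ℕ) - 1 := by
          rw [hx', Function.update_self]
        omega
      have h3 : ∑ i' ∈ Finset.univ.erase i, (x' i' : ℕ) = ∑ i' ∈ Finset.univ.erase i, (x i' : ℕ) := by
        refine Finset.sum_congr rfl (fun i' hi' => ?_)
        rw [hx', Function.update_of_ne (Finset.ne_of_mem_erase hi')]
      omega
    obtain ⟨a, ha1, ha2⟩ := ih x' (by omega)
    exact ⟨a, le_trans ha1 hle, ha2⟩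

lemma scd_pempty (c : PEmpty.{u_1+1} → ℕ) : Nonempty (SCD c) := by
  classical
  have hN : N c = 0 := by simp [N]
  have hr : ∀ x : V c, r c x = 0 := by intro x; simp [r]
  have hx : ∀ x y : V c, x = y := fun x y => funext (fun i => i.elim)
  set x0 : V c := fun i => i.elim with hx0
  refine ⟨⟨{(0, fun _ => x0)}, ?_, ?_, ?_, ?_, ?_, ?_⟩⟩
  · intro p hp; simp at hp; subst hp; omega
  · intro p hp m h1 h2; simp at hp; subst hp
    simp only [hr]; omega
  · intro p hp m h1 h2; simp at hp; subst hp; exact le_refl _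
  · intro x
    refine ⟨(0, fun _ => x0), by simp, ?_, ?_, hx _ _⟩ <;> simp [hr, hN]
  · intro p hp q hq m _ _ _ _ _
    simp at hp hq; rw [hp, hq]
  · intro p hp h0; simp at hp; subst hp; simp at h0

lemma scd_congr {ι₁ ι₂ : Type*} [Fintype ι₁] [Fintype ι₂] (e : ι₁ ≃ ι₂) (c : ι₂ → ℕ)
    (h : Nonempty (SCD (fun i => c (e i)))) : Nonempty (SCD c) := by
  classical
  obtain ⟨S⟩ := h
  set c₁ : ι₁ → ℕ := fun i => c (e i) with hc₁
  -- transfer map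
  have hcast : ∀ i₂ : ι₂, c₁ (e.symm i₂) + 1 = c i₂ + 1 := by
    intro i₂
    show c (e (e.symm i₂)) + 1 = c i₂ + 1
    rw [e.apply_symm_apply]
  set E : V c₁ → V c := fun x i₂ => Fin.cast (hcast i₂) (x (e.symm i₂)) with hE
  have hEval : ∀ (x : V c₁) (i₂ : ι₂), ((E x i₂ : ℕ)) = ((x (e.symm i₂) : ℕ)) := by
    intro x i₂; rfl
  have hEval' : ∀ (x : V c₁) (i₁ : ι₁), ((E x (e i₁) : ℕ)) = ((x i₁ : ℕ)) := by
    intro x i₁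
    rw [hEval]
    exact congrArg (fun i => ((x i : ℕ))) (e.symm_apply_apply i₁)
  have hEmono : ∀ {x y : V c₁}, x ≤ y → E x ≤ E y := by
    intro x y h i₂
    have := h (e.symm i₂)
    simp only [Fin.le_def, hEval]
    exact this
  have hEinj : Function.Injective E := by
    intro x y h
    funext i₁
    have := congrArg (fun z => ((z (e i₁) : ℕ))) h
    simp only [hEval'] at this
    exact Fin.ext this
  have hrE : ∀ x : V c₁, r c (E x) = r c₁ x := by
    intro x
    simp only [r]
    rw [← Equiv.sum_comp e (fun i₂ => ((E x i₂ : ℕ)))]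
    exact Finset.sum_congr rfl (fun i₁ _ => hEval' x i₁)
  have hNE : N c = N c₁ := by
    simp only [N, hc₁]
    rw [← Equiv.sum_comp e c]
  refine ⟨⟨S.chains.image (fun p => (p.1, fun m => E (p.2 m))), ?_, ?_, ?_, ?_, ?_, ?_⟩⟩
  · intro p hp
    obtain ⟨q, hq, rfl⟩ := Finset.mem_image.mp hp
    rw [hNE]; exact S.lo_le q hq
  · intro p hp m h1 h2
    obtain ⟨q, hq, rfl⟩ := Finset.mem_image.mp hp
    rw [hNE] at h2
    simpa [hrE] using S.rank_elt q hq m h1 h2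
  · intro p hp m h1 h2
    obtain ⟨q, hq, rfl⟩ := Finset.mem_image.mp hp
    rw [hNE] at h2
    exact hEmono (S.mono q hq m h1 h2)
  · intro x
    set x₁ : V c₁ := fun i₁ => Fin.cast (by rw [hc₁]) (x (e i₁)) with hx₁
    have hEx : E x₁ = x := by
      funext i₂
      refine Fin.ext ?_
      rw [hEval]
      show ((x (e (e.symm i₂)) : ℕ)) = _
      exact congrArg (fun i => ((x i : ℕ))) (e.apply_symm_apply i₂)
    have hrx : r c₁ x₁ = r c x := by rw [← hEx, hrE]
    obtain ⟨q, hq, h1, h2, h3⟩ := S.mem_chain x₁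
    refine ⟨(q.1, fun m => E (q.2 m)), Finset.mem_image_of_mem _ hq, ?_, ?_, ?_⟩
    · simpa [hrx] using h1
    · rw [hNE]; rw [hrx] at h2; exact h2
    · show E (q.2 (r c x)) = x
      rw [← hrx, h3, hEx]
  · intro p hp q hq m hp1 hp2 hq1 hq2 hpq
    obtain ⟨p', hp', rfl⟩ := Finset.mem_image.mp hp
    obtain ⟨q', hq', rfl⟩ := Finset.mem_image.mp hq
    rw [hNE] at hp2 hq2
    have : p'.2 m = q'.2 m := hEinj hpq
    rw [S.uniq p' hp' q' hq' m hp1 hp2 hq1 hq2 this]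
  · intro p hp h0
    obtain ⟨p', hp', rfl⟩ := Finset.mem_image.mp hp
    obtain ⟨q', hq', hq1, hb, ht⟩ := S.parent p' hp' h0
    refine ⟨(q'.1, fun m => E (q'.2 m)), Finset.mem_image_of_mem _ hq', hq1, hEmono hb, ?_⟩
    rw [hNE]
    exact hEmono ht

section OptionStep

variable {β : Type*} [Fintype β]

abbrev cs (c : Option β → ℕ) : β → ℕ := fun b => c (some b)

def pairup (c : Option β → ℕ) (s : Fin (c none + 1)) (y : V (cs c)) : V c :=
  fun i => match i with
  | none => s
  | some b => y b

lemma pairup_le {c : Option β → ℕ} {s s' : Fin (c none + 1)} {y y' : V (cs c)}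
    (hs : s ≤ s') (hy : y ≤ y') : pairup c s y ≤ pairup c s' y' := by
  intro i; cases i with
  | none => exact hs
  | some b => exact hy b

lemma pairup_eta (c : Option β → ℕ) (x : V c) :
    pairup c (x none) (fun b => x (some b)) = x := by
  funext i; cases i <;> rfl

lemma r_pairup (c : Option β → ℕ) (s : Fin (c none + 1)) (y : V (cs c)) :
    r c (pairup c s y) = (s : ℕ) + r (cs c) y := by
  simp only [r]
  rw [Fintype.sum_option (fun i => ((pairup c s y i : ℕ)))]
  rfl

lemma N_option (c : Option β → ℕ) : N c = c none + N (cs c) :=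
  Fintype.sum_option c

def mkF (c : Option β → ℕ) (v : ℕ) : Fin (c none + 1) := ⟨min v (c none), by omega⟩

lemma mkF_le {c : Option β → ℕ} {v w : ℕ} (h : v ≤ w) : mkF c v ≤ mkF c w := by
  simp only [mkF, Fin.le_def]; omega

lemma mkF_val {c : Option β → ℕ} {v : ℕ} (h : v ≤ c none) : ((mkF c v : ℕ)) = v := by
  simp only [mkF]; omega

def hook (c : Option β → ℕ) (p : ℕ × (ℕ → V (cs c))) (t : ℕ) : ℕ × (ℕ → V c) :=
  (p.1 + t, fun M =>
    if M ≤ N (cs c) - p.1 then pairup c (mkF c t) (p.2 (M - t))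
    else pairup c (mkF c (M - (N (cs c) - p.1 - t))) (p.2 (N (cs c) - p.1 - t)))

lemma hook_ver {c : Option β → ℕ} {p : ℕ × (ℕ → V (cs c))} {t M : ℕ}
    (h : M ≤ N (cs c) - p.1) :
    (hook c p t).2 M = pairup c (mkF c t) (p.2 (M - t)) := by
  simp [hook, h]

lemma hook_hor {c : Option β → ℕ} {p : ℕ × (ℕ → V (cs c))} {t M : ℕ}
    (hl : p.1 + p.1 + t ≤ N (cs c)) (h : N (cs c) - p.1 ≤ M) :
    (hook c p t).2 M
      = pairup c (mkF c (M - (N (cs c) - p.1 - t))) (p.2 (N (cs c) - p.1 - t)) := by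
  by_cases h2 : M ≤ N (cs c) - p.1
  · have hM : M = N (cs c) - p.1 := le_antisymm h2 h
    rw [hook_ver h2]
    have e1 : M - t = N (cs c) - p.1 - t := by omega
    have e2 : t = M - (N (cs c) - p.1 - t) := by omega
    rw [e1, ← e2]
  · simp [hook, h2]

lemma hook_decomp {c : Option β → ℕ} {p : ℕ × (ℕ → V (cs c))} {t M : ℕ}
    (hl : p.1 + p.1 ≤ N (cs c)) (htl : 2 * p.1 + t ≤ N (cs c)) (htd : t ≤ c none)
    (hM1 : p.1 + t ≤ M) (hM2 : M + (p.1 + t) ≤ N c) :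
    ∃ s m, (hook c p t).2 M = pairup c (mkF c s) (p.2 m) ∧ s ≤ c none ∧
      p.1 ≤ m ∧ m + p.1 ≤ N (cs c) ∧ s + m = M ∧
      (M ≤ N (cs c) - p.1 → (s = t ∧ m = M - t)) ∧
      (¬ (M ≤ N (cs c) - p.1) → m = N (cs c) - p.1 - t) := by
  have hNc := N_option c
  by_cases h : M ≤ N (cs c) - p.1
  · refine ⟨t, M - t, hook_ver h, htd, by omega, by omega, by omega, fun _ => ⟨rfl, rfl⟩, fun h' => absurd h h'⟩
  · refine ⟨M - (N (cs c) - p.1 - t), N (cs c) - p.1 - t, hook_hor (by omega) (by omega),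
      by omega, by omega, by omega, by omega, fun h' => absurd h' h, fun _ => rfl⟩

lemma scd_option (c : Option β → ℕ) (h : Nonempty (SCD (cs c))) : Nonempty (SCD c) := by
  classical
  obtain ⟨S⟩ := h
  have hNc : N c = c none + N (cs c) := N_option c
  set CH : Finset (ℕ × (ℕ → V c)) :=
    S.chains.biUnion
      (fun p => (Finset.range (min (c none) (N (cs c) - 2 * p.1) + 1)).image (hook c p))
    with hCH
  have hmem : ∀ q ∈ CH, ∃ p ∈ S.chains, ∃ t, t ≤ c none ∧ 2 * p.1 + t ≤ N (cs c) ∧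
      q = hook c p t := by
    intro q hq
    rw [hCH, Finset.mem_biUnion] at hq
    obtain ⟨p, hp, hq2⟩ := hq
    rw [Finset.mem_image] at hq2
    obtain ⟨t, ht, rfl⟩ := hq2
    rw [Finset.mem_range] at ht
    have := S.lo_le p hp
    exact ⟨p, hp, t, by omega, by omega, rfl⟩
  have hmem' : ∀ p ∈ S.chains, ∀ t, t ≤ c none → 2 * p.1 + t ≤ N (cs c) →
      hook c p t ∈ CH := by
    intro p hp t h1 h2
    rw [hCH, Finset.mem_biUnion]
    exact ⟨p, hp, Finset.mem_image_of_mem _ (Finset.mem_range.mpr (by omega))⟩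
  refine ⟨⟨CH, ?_, ?_, ?_, ?_, ?_, ?_⟩⟩
  · -- lo_le
    intro q hq
    obtain ⟨p, hp, t, htd, htl, rfl⟩ := hmem q hq
    simp only [hook]
    omega
  · -- rank_elt
    intro q hq M h1 h2
    obtain ⟨p, hp, t, htd, htl, rfl⟩ := hmem q hq
    simp only [hook] at h1 h2
    obtain ⟨s, m, heq, hsd, hm1, hm2, hsm, _, _⟩ :=
      hook_decomp (S.lo_le p hp) htl htd h1 h2
    rw [heq, r_pairup, mkF_val hsd, S.rank_elt p hp m hm1 hm2]
    exact hsm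
  · -- mono
    intro q hq M h1 h2
    obtain ⟨p, hp, t, htd, htl, rfl⟩ := hmem q hq
    simp only [hook] at h1 h2
    have hl := S.lo_le p hp
    by_cases hv : M + 1 ≤ N (cs c) - p.1
    · rw [hook_ver (by omega), hook_ver hv]
      have e1 : M + 1 - t = (M - t) + 1 := by omega
      rw [e1]
      exact pairup_le (le_refl _) (S.mono p hp (M - t) (by omega) (by omega))
    · by_cases hv2 : M ≤ N (cs c) - p.1
      · -- M = N(cs c) - p.1 exactly; use hor form for both
        rw [hook_hor (by omega) (by omega), hook_hor (by omega) (by omega)]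
        exact pairup_le (mkF_le (by omega)) (le_refl _)
      · rw [hook_hor (by omega) (by omega), hook_hor (by omega) (by omega)]
        exact pairup_le (mkF_le (by omega)) (le_refl _)
  · -- mem_chain
    intro x
    set s₀ : ℕ := ((x none : ℕ)) with hs₀def
    set y : V (cs c) := fun b => x (some b) with hydef
    have hs₀ : s₀ ≤ c none := Nat.lt_succ_iff.mp (x none).isLt
    have hrx : r c x = s₀ + r (cs c) y := by
      conv_lhs => rw [← pairup_eta c x]
      rw [r_pairup]
    obtain ⟨p, hp, hp1, hp2, hp3⟩ := S.mem_chain y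
    set m : ℕ := r (cs c) y with hmdef
    set t : ℕ := min s₀ (N (cs c) - p.1 - m) with htdef
    have hl := S.lo_le p hp
    have htd : t ≤ c none := by omega
    have htl : 2 * p.1 + t ≤ N (cs c) := by omega
    refine ⟨hook c p t, hmem' p hp t htd htl, ?_, ?_, ?_⟩
    · simp only [hook]; omega
    · simp only [hook]; omega
    · by_cases hcase : s₀ ≤ N (cs c) - p.1 - m
      · have ht : t = s₀ := by omega
        have hver : r c x ≤ N (cs c) - p.1 := by omega
        rw [hook_ver hver, ht]
        have e1 : r c x - s₀ = m := by omega
        rw [e1, hp3]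
        have e2 : mkF c s₀ = x none := Fin.ext (by rw [mkF_val hs₀])
        rw [e2]
        exact pairup_eta c x
      · have ht : t = N (cs c) - p.1 - m := by omega
        have hhor : N (cs c) - p.1 ≤ r c x := by omega
        rw [hook_hor (by omega) hhor]
        have e1 : N (cs c) - p.1 - t = m := by omega
        rw [e1, hp3]
        have e2 : mkF c (r c x - m) = x none := Fin.ext (by rw [mkF_val (by omega)]; omega)
        rw [e2]
        exact pairup_eta c x
  · -- uniq
    intro q1 hq1 q2 hq2 M ha1 ha2 hb1 hb2 heq
    obtain ⟨p1, hp1, t1, htd1, htl1, rfl⟩ := hmem q1 hq1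
    obtain ⟨p2, hp2, t2, htd2, htl2, rfl⟩ := hmem q2 hq2
    simp only [hook] at ha1 ha2 hb1 hb2
    obtain ⟨s1, m1, e1, hs1, hm11, hm12, hsm1, hver1, hhor1⟩ :=
      hook_decomp (S.lo_le p1 hp1) htl1 htd1 ha1 ha2
    obtain ⟨s2, m2, e2, hs2, hm21, hm22, hsm2, hver2, hhor2⟩ :=
      hook_decomp (S.lo_le p2 hp2) htl2 htd2 hb1 hb2
    rw [e1, e2] at heq
    have hnone := congrFun heq none
    have hsome : p1.2 m1 = p2.2 m2 := by
      funext b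
      exact congrFun heq (some b)
    have hs : s1 = s2 := by
      have h' : mkF c s1 = mkF c s2 := hnone
      have := congrArg (fun z : Fin (c none + 1) => (z : ℕ)) h'
      simpa [mkF_val hs1, mkF_val hs2] using this
    have hm : m1 = m2 := by omega
    rw [hm] at hsome
    have hpeq : p1 = p2 := S.uniq p1 hp1 p2 hp2 m2 (by omega) (by omega) hm21 hm22 hsome
    have ht : t1 = t2 := by
      by_cases hc : M ≤ N (cs c) - p1.1
      · obtain ⟨hv1, _⟩ := hver1 hc
        obtain ⟨hv2, _⟩ := hver2 (by rw [← hpeq]; exact hc)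
        omega
      · have h1 := hhor1 hc
        have h2 := hhor2 (by rw [← hpeq]; exact hc)
        rw [← hpeq] at h2
        omega
    rw [hpeq, ht]
  · -- parent
    intro q hq h0
    obtain ⟨p, hp, t, htd, htl, rfl⟩ := hmem q hq
    simp only [hook] at h0
    have hl := S.lo_le p hp
    by_cases ht0 : 0 < t
    · refine ⟨hook c p (t - 1), hmem' p hp (t - 1) (by omega) (by omega), ?_, ?_, ?_⟩
      · show p.1 + (t - 1) + 1 = (hook c p t).1
        simp only [hook]; omega
      · -- bottoms
        show (hook c p (t-1)).2 (p.1 + (t - 1)) ≤ (hook c p t).2 (p.1 + t)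
        rw [hook_ver (show p.1 + (t - 1) ≤ N (cs c) - p.1 by omega),
            hook_ver (show p.1 + t ≤ N (cs c) - p.1 by omega)]
        rw [show p.1 + (t - 1) - (t - 1) = p.1 by omega, show p.1 + t - t = p.1 by omega]
        exact pairup_le (mkF_le (by omega)) (le_refl _)
      · -- tops
        show (hook c p t).2 (N c - (p.1 + t)) ≤ (hook c p (t-1)).2 (N c - (p.1 + (t - 1)))
        rw [hook_hor (show p.1 + p.1 + t ≤ N (cs c) by omega)
              (show N (cs c) - p.1 ≤ N c - (p.1 + t) by omega),
            hook_hor (show p.1 + p.1 + (t - 1) ≤ N (cs c) by omega)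
              (show N (cs c) - p.1 ≤ N c - (p.1 + (t - 1)) by omega)]
        refine pairup_le (mkF_le (by omega)) ?_
        rw [show N (cs c) - p.1 - (t - 1) = (N (cs c) - p.1 - t) + 1 by omega]
        exact S.mono p hp (N (cs c) - p.1 - t) (by omega) (by omega)
    · -- t = 0, p.1 > 0
      have ht : t = 0 := by omega
      subst ht
      obtain ⟨p', hp', hp'1, hbot, htop⟩ := S.parent p hp (by omega)
      have hl' := S.lo_le p' hp'
      refine ⟨hook c p' 0, hmem' p' hp' 0 (by omega) (by omega), ?_, ?_, ?_⟩
      · show p'.1 + 0 + 1 = (hook c p 0).1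
        simp only [hook]; omega
      · show (hook c p' 0).2 (p'.1 + 0) ≤ (hook c p 0).2 (p.1 + 0)
        rw [hook_ver (show p'.1 + 0 ≤ N (cs c) - p'.1 by omega),
            hook_ver (show p.1 + 0 ≤ N (cs c) - p.1 by omega)]
        rw [show p'.1 + 0 - 0 = p'.1 by omega, show p.1 + 0 - 0 = p.1 by omega]
        exact pairup_le (le_refl _) hbot
      · show (hook c p 0).2 (N c - (p.1 + 0)) ≤ (hook c p' 0).2 (N c - (p'.1 + 0))
        rw [hook_hor (show p.1 + p.1 + 0 ≤ N (cs c) by omega)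
              (show N (cs c) - p.1 ≤ N c - (p.1 + 0) by omega),
            hook_hor (show p'.1 + p'.1 + 0 ≤ N (cs c) by omega)
              (show N (cs c) - p'.1 ≤ N c - (p'.1 + 0) by omega)]
        refine pairup_le ?_ ?_
        · exact mkF_le (by omega)
        · rw [show N (cs c) - p.1 - 0 = N (cs c) - p.1 by omega,
             show N (cs c) - p'.1 - 0 = N (cs c) - p'.1 by omega]
          exact htop
    
end OptionStep

lemma scd_exists (c : ι → ℕ) : Nonempty (SCD c) := by
  revert c
  refine Fintype.induction_empty_option (P := fun α _ => ∀ c : α → ℕ, Nonempty (SCD c))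
    ?_ ?_ ?_ ι
  · intro α β _ e h c
    letI : Fintype α := Fintype.ofEquiv β e.symm
    exact scd_congr e c (h _)
  · intro c; exact scd_pempty c
  · intro α _ h c
    exact scd_option c (h _)

lemma main (c : ι → ℕ) (j k : ℕ) (hjk : j ≤ k) (hk : k ≤ N c) (hjkN : j + k ≤ N c) :
    ∃ F : Finset (V c × V c),
      F.card ≤ {x : V c | r c x = k}.ncard ∧
      (∀ p ∈ F, r c p.1 = j ∧ r c p.2 = k) ∧
      (⋃ p ∈ F, Set.Icc p.1 p.2) = {x : V c | j ≤ r c x ∧ r c x ≤ k} := by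
  classical
  obtain ⟨S⟩ := scd_exists c
  set O : Finset (ℕ × (ℕ → V c)) := S.chains.filter (fun p => p.1 ≤ min k (N c - k)) with hO
  have hOmem : ∀ p ∈ O, p ∈ S.chains ∧ p.1 ≤ k ∧ p.1 ≤ N c - k := by
    intro p hp
    rw [hO, Finset.mem_filter] at hp
    exact ⟨hp.1, by omega, by omega⟩
  have key : ∀ p ∈ O, ∃ a : V c, a ≤ p.2 (max j p.1) ∧ r c a = j := by
    intro p hp
    obtain ⟨hpc, h1, h2⟩ := hOmem p hp
    have hll := S.lo_le p hpc
    have hu : r c (p.2 (max j p.1)) = max j p.1 :=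
      S.rank_elt p hpc _ (le_max_right _ _) (by omega)
    exact exists_lower c j (max j p.1 - j) _ (by omega)
  choose aa haa hra using key
  set F : Finset (V c × V c) := O.attach.image (fun q => (aa q.1 q.2, q.1.2 k)) with hF
  have hrk : ∀ p ∈ O, r c (p.2 k) = k := by
    intro p hp
    obtain ⟨hpc, h1, h2⟩ := hOmem p hp
    exact S.rank_elt p hpc k h1 (by omega)
  refine ⟨F, ?_, ?_, ?_⟩
  · have h1 : F.card ≤ O.card := le_trans (Finset.card_image_le) (by rw [Finset.card_attach])
    refine le_trans h1 ?_
    rw [Set.ncard_eq_toFinset_card']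
    refine Finset.card_le_card_of_injOn (fun p => p.2 k) ?_ ?_
    · intro p hp
      rw [Finset.mem_coe, Set.mem_toFinset]
      exact hrk p hp
    · intro p hp q hq hpq
      simp only [Finset.mem_coe] at hp hq
      obtain ⟨hpc, hp1, hp2⟩ := hOmem p hp
      obtain ⟨hqc, hq1, hq2⟩ := hOmem q hq
      exact S.uniq p hpc q hqc k hp1 (by omega) hq1 (by omega) hpq
  · intro pr hpr
    rw [hF, Finset.mem_image] at hpr
    obtain ⟨q, _, rfl⟩ := hpr
    exact ⟨hra q.1 q.2, hrk q.1 q.2⟩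
  · ext x
    simp only [Set.mem_iUnion, Set.mem_setOf_eq, Set.mem_Icc]
    constructor
    · rintro ⟨pr, hpr, hx1, hx2⟩
      rw [hF, Finset.mem_image] at hpr
      obtain ⟨q, _, rfl⟩ := hpr
      have e1 := hra q.1 q.2
      have e2 := hrk q.1 q.2
      exact ⟨by rw [← e1]; exact r_mono c hx1, by rw [← e2]; exact r_mono c hx2⟩
    · rintro ⟨hxj, hxk⟩
      obtain ⟨p, hp, h1, h2, h3⟩ := S.mem_chain x
      have hll := S.lo_le p hp
      by_cases hcase : p.1 ≤ min k (N c - k)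
      · have hpO : p ∈ O := by rw [hO, Finset.mem_filter]; exact ⟨hp, hcase⟩
        refine ⟨(aa p hpO, p.2 k), ?_, ?_, ?_⟩
        · rw [hF, Finset.mem_image]
          exact ⟨⟨p, hpO⟩, Finset.mem_attach _ _, rfl⟩
        · refine le_trans (haa p hpO) ?_
          rw [← h3]
          exact S.chain_le hp (le_max_right _ _) (by omega) (by omega)
        · rw [← h3]
          exact S.chain_le hp h1 hxk (by omega)
      · have h5 : N c - k < p.1 := by omega
        obtain ⟨q, hq, hq1, hbot, htop⟩ := S.ancestor p.1 p hp rfl (N c - k) (by omega)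
        have hqO : q ∈ O := by
          rw [hO, Finset.mem_filter]
          exact ⟨hq, by omega⟩
        refine ⟨(aa q hqO, q.2 k), ?_, ?_, ?_⟩
        · rw [hF, Finset.mem_image]
          exact ⟨⟨q, hqO⟩, Finset.mem_attach _ _, rfl⟩
        · show aa q hqO ≤ x
          have hmax : max j q.1 = N c - k := by omega
          refine le_trans (haa q hqO) ?_
          rw [hmax, ← hq1]
          refine le_trans (le_trans ?_ hbot) ?_
          · rw [hq1]
          · rw [← h3]
            exact S.chain_le hp (le_refl _) h1 (by omega)
        · show x ≤ q.2 k
          have htop' : p.2 (N c - p.1) ≤ q.2 k := by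
            rw [show N c - (N c - k) = k by omega] at htop
            exact htop
          refine le_trans ?_ htop'
          rw [← h3]
          exact S.chain_le hp (by omega) (by omega) (by omega)

def negV (c : ι → ℕ) (x : V c) : V c := fun i => ⟨c i - (x i : ℕ), by omega⟩

lemma negV_val (c : ι → ℕ) (x : V c) (i : ι) : ((negV c x i : ℕ)) = c i - (x i : ℕ) := rfl

lemma r_negV (c : ι → ℕ) (x : V c) : r c x + r c (negV c x) = N c := by
  simp only [r, N]
  rw [← Finset.sum_add_distrib]
  refine Finset.sum_congr rfl (fun i _ => ?_)
  have := Nat.lt_succ_iff.mp (x i).isLt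
  rw [negV_val]
  omega

lemma negV_negV (c : ι → ℕ) (x : V c) : negV c (negV c x) = x := by
  funext i
  refine Fin.ext ?_
  have := Nat.lt_succ_iff.mp (x i).isLt
  simp only [negV]
  omega

lemma negV_le_iff (c : ι → ℕ) (x y : V c) : negV c x ≤ y ↔ negV c y ≤ x := by
  constructor <;> intro h i <;>
    (have h2 := h i
     have h3 := Nat.lt_succ_iff.mp (x i).isLt
     have h4 := Nat.lt_succ_iff.mp (y i).isLt
     simp only [Fin.le_def, negV_val] at h2 ⊢
     omega)

lemma le_negV_iff (c : ι → ℕ) (x y : V c) : x ≤ negV c y ↔ y ≤ negV c x := by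
  constructor <;> intro h i <;>
    (have h2 := h i
     have h3 := Nat.lt_succ_iff.mp (x i).isLt
     have h4 := Nat.lt_succ_iff.mp (y i).isLt
     simp only [Fin.le_def, negV_val] at h2 ⊢
     omega)

end Stmt14Aux


/-- **(Bouchemakh–Engel).** Every finite product of finite chains has the strong
interval covering property: with `P = Π i, {0, …, c i}` ordered componentwise and
rank `r x = Σ i, x i`, for all `j ≤ k ≤ Σ i, c i` the set
`{x | j ≤ r x ≤ k}` is the union of `max(|L_j|, |L_k|)` intervals `[a, b]` with
`a` in level `j` and `b` in level `k`. -/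
theorem stmt14 {ι : Type*} [Fintype ι] (c : ι → ℕ)
    (j k : ℕ) (hjk : j ≤ k) (hk : k ≤ ∑ i, c i) :
    ∃ F : Finset ((∀ i, Fin (c i + 1)) × (∀ i, Fin (c i + 1))),
      F.card ≤ max {x : ∀ i, Fin (c i + 1) | ∑ i, (x i : ℕ) = j}.ncard
                   {x : ∀ i, Fin (c i + 1) | ∑ i, (x i : ℕ) = k}.ncard ∧
      (∀ p ∈ F, (∑ i, (p.1 i : ℕ)) = j ∧ (∑ i, (p.2 i : ℕ)) = k) ∧
      (⋃ p ∈ F, Set.Icc p.1 p.2) =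
        {x : ∀ i, Fin (c i + 1) | j ≤ ∑ i, (x i : ℕ) ∧ ∑ i, (x i : ℕ) ≤ k} := by
  classical
  open Stmt14Aux in
  have hk' : k ≤ N c := hk
  rcases le_or_gt (j + k) (Stmt14Aux.N c) with hc | hc
  · obtain ⟨F, h1, h2, h3⟩ := Stmt14Aux.main c j k hjk hk' hc
    refine ⟨F, ?_, h2, h3⟩
    exact le_trans h1 (le_max_right _ _)
  · obtain ⟨F', h1, h2, h3⟩ := Stmt14Aux.main c (Stmt14Aux.N c - k) (Stmt14Aux.N c - j)
      (by omega) (by omega) (by omega)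
    refine ⟨F'.image (fun p => ((Stmt14Aux.negV c) p.2, (Stmt14Aux.negV c) p.1)), ?_, ?_, ?_⟩
    · have e1 : {x : Stmt14Aux.V c | Stmt14Aux.r c x = Stmt14Aux.N c - j}
          = (Stmt14Aux.negV c) '' {x : Stmt14Aux.V c | Stmt14Aux.r c x = j} := by
        ext z
        simp only [Set.mem_image, Set.mem_setOf_eq]
        constructor
        · intro hz
          refine ⟨(Stmt14Aux.negV c) z, ?_, Stmt14Aux.negV_negV c z⟩
          have := Stmt14Aux.r_negV c z
          have h5 := Stmt14Aux.r_le_N c z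
          omega
        · rintro ⟨w, hw, rfl⟩
          have := Stmt14Aux.r_negV c w
          omega
      have hinj : Function.Injective (Stmt14Aux.negV c) := by
        intro a b hab
        have := congrArg (Stmt14Aux.negV c) hab
        rwa [Stmt14Aux.negV_negV, Stmt14Aux.negV_negV] at this
      have e2 : {x : Stmt14Aux.V c | Stmt14Aux.r c x = Stmt14Aux.N c - j}.ncard
          = {x : Stmt14Aux.V c | Stmt14Aux.r c x = j}.ncard := by
        rw [e1, Set.ncard_image_of_injective _ hinj]
      refine le_trans (Finset.card_image_le) (le_trans h1 ?_)
      rw [e2]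
      exact le_max_left _ _
    · intro pr hpr
      rw [Finset.mem_image] at hpr
      obtain ⟨q, hq, rfl⟩ := hpr
      obtain ⟨hq1, hq2⟩ := h2 q hq
      have n1 := Stmt14Aux.r_negV c q.1
      have n2 := Stmt14Aux.r_negV c q.2
      constructor
      · show Stmt14Aux.r c ((Stmt14Aux.negV c) q.2) = j
        omega
      · show Stmt14Aux.r c ((Stmt14Aux.negV c) q.1) = k
        omega
    · ext x
      have hrr : Stmt14Aux.r c x = ∑ i, ((x i : ℕ)) := rfl
      have hNN : Stmt14Aux.N c = ∑ i, c i := rfl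
      have hx3 := Stmt14Aux.r_le_N c x
      have hx4 := Stmt14Aux.r_negV c x
      have hxm : (Stmt14Aux.negV c) x ∈ (⋃ p ∈ F', Set.Icc p.1 p.2) ↔
          (Stmt14Aux.N c - k ≤ Stmt14Aux.r c ((Stmt14Aux.negV c) x) ∧
            Stmt14Aux.r c ((Stmt14Aux.negV c) x) ≤ Stmt14Aux.N c - j) := by
        rw [h3]; rfl
      simp only [Set.mem_iUnion, Set.mem_Icc, Finset.mem_image, Set.mem_setOf_eq] at hxm ⊢
      constructor
      · rintro ⟨pr, ⟨q, hq, rfl⟩, hx1, hx2⟩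
        have hx1' : (Stmt14Aux.negV c) q.2 ≤ x := hx1
        have hx2' : x ≤ (Stmt14Aux.negV c) q.1 := hx2
        have hres : Stmt14Aux.N c - k ≤ Stmt14Aux.r c ((Stmt14Aux.negV c) x) ∧
            Stmt14Aux.r c ((Stmt14Aux.negV c) x) ≤ Stmt14Aux.N c - j := by
          refine hxm.mp ⟨q, hq, ?_, ?_⟩
          · exact (Stmt14Aux.le_negV_iff c x q.1).mp hx2'
          · exact (Stmt14Aux.negV_le_iff c q.2 x).mp hx1'
        omega
      · rintro ⟨hj1, hj2⟩
        have hdual : Stmt14Aux.N c - k ≤ Stmt14Aux.r c ((Stmt14Aux.negV c) x) ∧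
            Stmt14Aux.r c ((Stmt14Aux.negV c) x) ≤ Stmt14Aux.N c - j := by
          constructor <;> omega
        obtain ⟨q, hq, hx1, hx2⟩ := hxm.mpr hdual
        refine ⟨((Stmt14Aux.negV c) q.2, (Stmt14Aux.negV c) q.1), ⟨q, hq, rfl⟩, ?_, ?_⟩
        · show (Stmt14Aux.negV c) q.2 ≤ x
          exact (Stmt14Aux.negV_le_iff c q.2 x).mpr hx2
        · show x ≤ (Stmt14Aux.negV c) q.1
          exact (Stmt14Aux.le_negV_iff c x q.1).mpr hx1
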